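/- If a metric graph G is (k,m)-edge-chordal for constants k,m ≥ 0, then G is ε-densely (k,m)-path-chordal; moreover one may take ε = k/2, i.e., for every cycle C in G with L(C) ≥ k and every point p ∈ C, there exists an edge-shortcut of C of length at most m having an endpoint in the ball B_C(p, k/2) taken with respect to the length metric d_C on C. -/

import Mathlib

open SimpleGraph

namespace Chordality

variable {V : Type*} {G : SimpleGraph V}

/-- The length of a walk in a graph whose edge `e` has length `ℓ e`. -/
noncomputable def wlen (ℓ : Sym2 V → ℝ) {u v : V} (w : G.Walk u v) : ℝ :=
  (w.edges.map ℓ).sum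

/-- The path metric of a metric graph: the infimum of the lengths of walks joining
two vertices. -/
noncomputable def gdist (G : SimpleGraph V) (ℓ : Sym2 V → ℝ) (u v : V) : ℝ :=
  sInf {x : ℝ | ∃ w : G.Walk u v, wlen ℓ w = x}

/-- A walk is geodesic if its length realizes the path metric between its endpoints. -/
def IsGeodesicWalk (ℓ : Sym2 V → ℝ) {u v : V} (w : G.Walk u v) : Prop :=
  wlen ℓ w = gdist G ℓ u v

/-- `G`, with edge lengths `ℓ`, is a metric graph: connected, locally finite,
with positive edge lengths. -/
def IsMetricGraph (G : SimpleGraph V) (ℓ : Sym2 V → ℝ) : Prop :=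
  G.Connected ∧ (∀ e ∈ G.edgeSet, 0 < ℓ e) ∧ ∀ v : V, (G.neighborSet v).Finite

/-- A walk lies inside the closed walk `c`. -/
def WalkIn {z u v : V} (c : G.Walk z z) (w : G.Walk u v) : Prop :=
  (∀ e ∈ w.edges, e ∈ c.edges) ∧ ∀ a ∈ w.support, a ∈ c.support

/-- The length metric `d_C` of a cycle `c`, evaluated on vertices of `c`:
the infimum of lengths of walks joining `u` and `v` inside `c`. -/
noncomputable def cdist (ℓ : Sym2 V → ℝ) {z : V} (c : G.Walk z z) (u v : V) : ℝ :=
  sInf {x : ℝ | ∃ w : G.Walk u v, WalkIn c w ∧ wlen ℓ w = x}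

/-- `σ` is a shortcut of the cycle `c`: a path joining two vertices `p, q` of `c`
with `L(σ) < d_C(p, q)`. -/
def IsShortcut (ℓ : Sym2 V → ℝ) {z p q : V} (c : G.Walk z z) (σ : G.Walk p q) : Prop :=
  σ.IsPath ∧ p ∈ c.support ∧ q ∈ c.support ∧ wlen ℓ σ < cdist ℓ c p q

/-- `σ` is a strict shortcut of `c`: a shortcut meeting `c` only at its endpoints. -/
def IsStrictShortcut (ℓ : Sym2 V → ℝ) {z p q : V} (c : G.Walk z z) (σ : G.Walk p q) : Prop :=
  IsShortcut ℓ c σ ∧ ∀ a ∈ σ.support, a ∈ c.support → a = p ∨ a = q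

/-- `v` is a shortcut vertex of `c`, i.e. an endpoint of some strict shortcut of `c`. -/
def ShortcutVertex (ℓ : Sym2 V → ℝ) {z : V} (c : G.Walk z z) (v : V) : Prop :=
  ∃ (p q : V) (σ : G.Walk p q), IsStrictShortcut ℓ c σ ∧ (v = p ∨ v = q)

/-- `v` is a shortcut vertex of `c` associated to a strict shortcut of length at most `m`. -/
def ShortcutVertexLe (ℓ : Sym2 V → ℝ) {z : V} (c : G.Walk z z) (m : ℝ) (v : V) : Prop :=
  ∃ (p q : V) (σ : G.Walk p q),
    IsStrictShortcut ℓ c σ ∧ wlen ℓ σ ≤ m ∧ (v = p ∨ v = q)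

/-- `(k,m)`-edge-chordal: every cycle of length at least `k` has a shortcut consisting of
a single edge of length at most `m`. -/
def EdgeChordal (G : SimpleGraph V) (ℓ : Sym2 V → ℝ) (k m : ℝ) : Prop :=
  ∀ (z : V) (c : G.Walk z z), c.IsCycle → k ≤ wlen ℓ c →
    ∃ (p q : V) (h : G.Adj p q),
      IsShortcut ℓ c (Walk.cons h Walk.nil) ∧ ℓ s(p, q) ≤ m

/-- `k`-path-chordal: every cycle of length at least `k` admits a shortcut. -/
def PathChordal (G : SimpleGraph V) (ℓ : Sym2 V → ℝ) (k : ℝ) : Prop :=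
  ∀ (z : V) (c : G.Walk z z), c.IsCycle → k ≤ wlen ℓ c →
    ∃ (p q : V) (σ : G.Walk p q), IsShortcut ℓ c σ

/-- `(k,m)`-path-chordal: every cycle of length at least `k` admits a shortcut of length
at most `m`. -/
def PathChordalLe (G : SimpleGraph V) (ℓ : Sym2 V → ℝ) (k m : ℝ) : Prop :=
  ∀ (z : V) (c : G.Walk z z), c.IsCycle → k ≤ wlen ℓ c →
    ∃ (p q : V) (σ : G.Walk p q), IsShortcut ℓ c σ ∧ wlen ℓ σ ≤ m

/-- `ε`-densely `(k,m)`-path-chordal: on every cycle of length at least `k`, the vertices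
that are shortcut vertices of strict shortcuts of length at most `m` form an `ε`-dense
subset of `(C, d_C)`. -/
def DenselyPathChordal (G : SimpleGraph V) (ℓ : Sym2 V → ℝ) (ε k m : ℝ) : Prop :=
  ∀ (z : V) (c : G.Walk z z), c.IsCycle → k ≤ wlen ℓ c →
    ∀ x ∈ c.support, ∃ v, ShortcutVertexLe ℓ c m v ∧ cdist ℓ c v x < ε

/-- `ε`-densely `k`-path-chordal: on every cycle of length at least `k`, the shortcut
vertices (of strict shortcuts, with no bound on their lengths) form an `ε`-dense subset
of `(C, d_C)`. -/
def DenselyKPathChordal (G : SimpleGraph V) (ℓ : Sym2 V → ℝ) (ε k : ℝ) : Prop :=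
  ∀ (z : V) (c : G.Walk z z), c.IsCycle → k ≤ wlen ℓ c →
    ∀ x ∈ c.support, ∃ v, ShortcutVertex ℓ c v ∧ cdist ℓ c v x < ε

/-- The geodesic triangle with sides `g1, g2, g3` is `δ`-thin: each side is contained in
the `δ`-neighborhood of the union of the other two sides. -/
def ThinTriangle (ℓ : Sym2 V → ℝ) (δ : ℝ) {x y z : V}
    (g1 : G.Walk x y) (g2 : G.Walk y z) (g3 : G.Walk z x) : Prop :=
  (∀ p ∈ g1.support, ∃ q, (q ∈ g2.support ∨ q ∈ g3.support) ∧ gdist G ℓ p q ≤ δ) ∧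
  (∀ p ∈ g2.support, ∃ q, (q ∈ g3.support ∨ q ∈ g1.support) ∧ gdist G ℓ p q ≤ δ) ∧
  (∀ p ∈ g3.support, ∃ q, (q ∈ g1.support ∨ q ∈ g2.support) ∧ gdist G ℓ p q ≤ δ)

/-- `G` is `δ`-hyperbolic: every geodesic triangle is `δ`-thin. -/
def Hyperbolic (G : SimpleGraph V) (ℓ : Sym2 V → ℝ) (δ : ℝ) : Prop :=
  ∀ (x y z : V) (g1 : G.Walk x y) (g2 : G.Walk y z) (g3 : G.Walk z x),
    IsGeodesicWalk ℓ g1 → IsGeodesicWalk ℓ g2 → IsGeodesicWalk ℓ g3 →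
    ThinTriangle ℓ δ g1 g2 g3

/-- The sharp hyperbolicity constant `δ(G)`. -/
noncomputable def hypConst (G : SimpleGraph V) (ℓ : Sym2 V → ℝ) : ℝ :=
  sInf {δ : ℝ | 0 ≤ δ ∧ Hyperbolic G ℓ δ}

/-- A walk lies inside the geodesic triangle with sides `g1, g2, g3`. -/
def WalkInTri {x y z u v : V} (g1 : G.Walk x y) (g2 : G.Walk y z) (g3 : G.Walk z x)
    (w : G.Walk u v) : Prop :=
  (∀ e ∈ w.edges, e ∈ g1.edges ∨ e ∈ g2.edges ∨ e ∈ g3.edges) ∧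
  ∀ a ∈ w.support, a ∈ g1.support ∨ a ∈ g2.support ∨ a ∈ g3.support

/-- The length metric `d_T` of the geodesic triangle with sides `g1, g2, g3`,
evaluated on vertices of the triangle. -/
noncomputable def tdist (ℓ : Sym2 V → ℝ) {x y z : V} (g1 : G.Walk x y) (g2 : G.Walk y z)
    (g3 : G.Walk z x) (u v : V) : ℝ :=
  sInf {r : ℝ | ∃ w : G.Walk u v, WalkInTri g1 g2 g3 w ∧ wlen ℓ w = r}

/-- `σ` is a shortcut of the geodesic triangle with sides `g1, g2, g3`: a path joining
two vertices `p, q` of the triangle with `L(σ) < d_T(p, q)`. -/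
def IsTriShortcut (ℓ : Sym2 V → ℝ) {x y z p q : V} (g1 : G.Walk x y) (g2 : G.Walk y z)
    (g3 : G.Walk z x) (σ : G.Walk p q) : Prop :=
  σ.IsPath ∧ (p ∈ g1.support ∨ p ∈ g2.support ∨ p ∈ g3.support) ∧
    (q ∈ g1.support ∨ q ∈ g2.support ∨ q ∈ g3.support) ∧
    wlen ℓ σ < tdist ℓ g1 g2 g3 p q

/-- `v` is a shortcut vertex of the triangle, associated to a shortcut of length
at most `m`. -/
def TriShortcutVertexLe (ℓ : Sym2 V → ℝ) {x y z : V} (g1 : G.Walk x y) (g2 : G.Walk y z)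
    (g3 : G.Walk z x) (m : ℝ) (v : V) : Prop :=
  ∃ (p q : V) (σ : G.Walk p q),
    IsTriShortcut ℓ g1 g2 g3 σ ∧ wlen ℓ σ ≤ m ∧ (v = p ∨ v = q)

/-- `ε`-densely `(k,m)`-path-chordal on the triangles: for every geodesic triangle of
total length at least `k`, the shortcut vertices of shortcuts of length at most `m`
form an `ε`-dense subset of `(T, d_T)`. -/
def DenselyPathChordalOnTriangles (G : SimpleGraph V) (ℓ : Sym2 V → ℝ) (ε k m : ℝ) : Prop :=
  ∀ (x y z : V) (g1 : G.Walk x y) (g2 : G.Walk y z) (g3 : G.Walk z x),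
    IsGeodesicWalk ℓ g1 → IsGeodesicWalk ℓ g2 → IsGeodesicWalk ℓ g3 →
    k ≤ wlen ℓ g1 + wlen ℓ g2 + wlen ℓ g3 →
    ∀ p, (p ∈ g1.support ∨ p ∈ g2.support ∨ p ∈ g3.support) →
      ∃ v, TriShortcutVertexLe ℓ g1 g2 g3 m v ∧ tdist ℓ g1 g2 g3 v p < ε

end Chordality



namespace Chordality

section Aux

variable {V : Type*} {G : SimpleGraph V}

@[simp] lemma wlen_nil' {u : V} (ℓ : Sym2 V → ℝ) :
    wlen ℓ (Walk.nil : G.Walk u u) = 0 := by simp [wlen]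

lemma wlen_cons (ℓ : Sym2 V → ℝ) {u v x : V} (h : G.Adj u v) (p : G.Walk v x) :
    wlen ℓ (Walk.cons h p) = ℓ s(u, v) + wlen ℓ p := by simp [wlen]

lemma wlen_append (ℓ : Sym2 V → ℝ) {u v x : V} (p : G.Walk u v) (q : G.Walk v x) :
    wlen ℓ (p.append q) = wlen ℓ p + wlen ℓ q := by
  simp [wlen, Walk.edges_append]

lemma wlen_reverse (ℓ : Sym2 V → ℝ) {u v : V} (p : G.Walk u v) :
    wlen ℓ p.reverse = wlen ℓ p := by
  simp [wlen, Walk.edges_reverse, List.map_reverse, List.sum_reverse]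

section Pos

variable {ℓ : Sym2 V → ℝ} (hpos : ∀ e ∈ G.edgeSet, 0 < ℓ e)
include hpos

lemma wlen_nonneg {u v : V} (w : G.Walk u v) : 0 ≤ wlen ℓ w := by
  apply List.sum_nonneg
  intro r hr
  simp only [List.mem_map] at hr
  obtain ⟨e, he, rfl⟩ := hr
  exact (hpos e (w.edges_subset_edgeSet he)).le

lemma cdistSet_bddBelow {z u v : V} (c : G.Walk z z) :
    BddBelow {x : ℝ | ∃ w : G.Walk u v, WalkIn c w ∧ wlen ℓ w = x} := by
  refine ⟨0, ?_⟩
  rintro x ⟨w, -, rfl⟩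
  exact wlen_nonneg hpos w

lemma cdist_le {z u v : V} {c : G.Walk z z} {w : G.Walk u v} (hw : WalkIn c w) :
    cdist ℓ c u v ≤ wlen ℓ w :=
  csInf_le (cdistSet_bddBelow hpos c) ⟨w, hw, rfl⟩

end Pos

lemma WalkIn.reverse {z u v : V} {c : G.Walk z z} {w : G.Walk u v} (hw : WalkIn c w) :
    WalkIn c w.reverse := by
  refine ⟨fun e he => hw.1 e ?_, fun a ha => hw.2 a ?_⟩
  · simpa [Walk.edges_reverse] using he
  · simpa [Walk.support_reverse] using ha

lemma cdist_symm (ℓ : Sym2 V → ℝ) {z : V} (c : G.Walk z z) (u v : V) :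
    cdist ℓ c u v = cdist ℓ c v u := by
  unfold cdist
  congr 1
  ext r
  constructor <;> rintro ⟨w, hw, rfl⟩ <;> exact ⟨w.reverse, hw.reverse, wlen_reverse ℓ w⟩

lemma mem_support_tail_closed {y : V} (d : G.Walk y y) (hd : d.length ≠ 0) {v : V} :
    v ∈ d.support ↔ v ∈ d.support.tail := by
  cases d with
  | nil => simp at hd
  | cons h t =>
      simp only [Walk.support_cons, List.tail_cons, List.mem_cons]
      constructor
      · rintro (rfl | h)
        · exact t.end_mem_support
        · exact h
      · exact Or.inr

lemma length_rotate [DecidableEq V] {z u : V} (c : G.Walk z z) (hu : u ∈ c.support) :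
    (c.rotate u hu).length = c.length := by
  have h := congrArg Walk.length (c.take_spec hu)
  rw [Walk.length_append] at h
  unfold Walk.rotate
  rw [Walk.length_append]
  omega

lemma mem_support_rotate [DecidableEq V] {z u : V} (c : G.Walk z z) (hu : u ∈ c.support)
    (hne : c.length ≠ 0) {v : V} :
    v ∈ (c.rotate u hu).support ↔ v ∈ c.support := by
  have h1 : (c.rotate u hu).length ≠ 0 := by rw [length_rotate]; exact hne
  rw [mem_support_tail_closed _ h1, mem_support_tail_closed _ hne]
  exact (c.support_rotate u hu).mem_iff

lemma mem_edges_rotate [DecidableEq V] {z u : V} (c : G.Walk z z) (hu : u ∈ c.support)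
    {e : Sym2 V} :
    e ∈ (c.rotate u hu).edges ↔ e ∈ c.edges :=
  (c.rotate_edges u hu).perm.mem_iff

lemma exists_walkIn {z u v : V} (c : G.Walk z z) (hne : c.length ≠ 0)
    (hu : u ∈ c.support) (hv : v ∈ c.support) : ∃ w : G.Walk u v, WalkIn c w := by
  classical
  have hv' : v ∈ (c.rotate u hu).support := (mem_support_rotate c hu hne).2 hv
  refine ⟨(c.rotate u hu).takeUntil v hv', ?_, ?_⟩
  · intro e he
    exact (mem_edges_rotate c hu).1 (Walk.edges_takeUntil_subset _ hv' he)
  · intro a ha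
    exact (mem_support_rotate c hu hne).1 (Walk.support_takeUntil_subset _ hv' ha)

lemma two_le_length_of_ne {u v : V} (w : G.Walk u v) (hne : u ≠ v)
    (hno : s(u, v) ∉ w.edges) : 2 ≤ w.length := by
  cases w with
  | nil => exact absurd rfl hne
  | cons h t =>
      cases t with
      | nil => simp at hno
      | cons h' t' => simp [Walk.length_cons]

lemma project {ℓ : Sym2 V → ℝ} (hpos : ∀ e ∈ G.edgeSet, 0 < ℓ e)
    {z a b : V} {c : G.Walk z z} (hab : G.Adj a b) (wk : G.Walk a b) (wd : G.Walk b a)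
    (Hsab : s(a, b) ∉ c.edges)
    (Hclass : ∀ e ∈ c.edges, e ∈ wk.edges ∨ e ∈ wd.edges)
    (Hinter : ∀ v₀ ∈ wk.support, v₀ ∈ wd.support → v₀ = a ∨ v₀ = b)
    (Hlt : ℓ s(a, b) < cdist ℓ c a b) (Hlt' : ℓ s(a, b) < cdist ℓ c b a)
    {u v : V} (w : G.Walk u v) :
    WalkIn c w → v ∈ (Walk.cons hab.symm wk).support →
    (u ∈ (Walk.cons hab.symm wk).support →
      ∃ w₂ : G.Walk u v, WalkIn (Walk.cons hab.symm wk) w₂ ∧ wlen ℓ w₂ ≤ wlen ℓ w) ∧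
    (u ∉ (Walk.cons hab.symm wk).support →
      ∃ b' : V, (b' = a ∨ b' = b) ∧ ∃ (wa : G.Walk u b') (w₂ : G.Walk b' v),
        WalkIn c wa ∧ WalkIn (Walk.cons hab.symm wk) w₂ ∧
        wlen ℓ wa + wlen ℓ w₂ ≤ wlen ℓ w) := by
  have memC'_wd : ∀ v₀, v₀ ∈ (Walk.cons hab.symm wk).support → v₀ ∈ wd.support →
      v₀ = a ∨ v₀ = b := by
    intro v₀ hv₀ hv₀d
    rw [Walk.support_cons, List.mem_cons] at hv₀
    rcases hv₀ with rfl | hv₀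
    · exact Or.inr rfl
    · exact Hinter v₀ hv₀ hv₀d
  induction w with
  | nil =>
      intro hw hv
      refine ⟨fun hu => ⟨Walk.nil, ⟨by simp, ?_⟩, le_rfl⟩, fun hu => absurd hv hu⟩
      intro a' ha'
      simp only [Walk.support_nil, List.mem_singleton] at ha'
      exact ha' ▸ hv
  | @cons u u' v h' t ih =>
      intro hw hv
      have hwt : WalkIn c t :=
        ⟨fun e he => hw.1 e (by simp [he]), fun a' ha' => hw.2 a' (by simp [ha'])⟩
      have he_c : s(u, u') ∈ c.edges := hw.1 _ (by simp)
      have hposE : 0 < ℓ s(u, u') := hpos _ (c.edges_subset_edgeSet he_c)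
      have ih' := ih hwt hv
      rcases Hclass _ he_c with hek | hed
      · -- the edge lies on the kept arc
        have hu_wk : u ∈ wk.support := wk.fst_mem_support_of_mem_edges hek
        have hu'_wk : u' ∈ wk.support := wk.snd_mem_support_of_mem_edges hek
        have hu : u ∈ (Walk.cons hab.symm wk).support := by
          rw [Walk.support_cons]; exact List.mem_cons_of_mem _ hu_wk
        have hu' : u' ∈ (Walk.cons hab.symm wk).support := by
          rw [Walk.support_cons]; exact List.mem_cons_of_mem _ hu'_wk
        obtain ⟨t₂, ht₂, hlen₂⟩ := ih'.1 hu'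
        refine ⟨fun _ => ⟨Walk.cons h' t₂, ⟨?_, ?_⟩, ?_⟩, fun hnu => absurd hu hnu⟩
        · intro e he
          rw [Walk.edges_cons, List.mem_cons] at he
          rcases he with rfl | he
          · rw [Walk.edges_cons]; exact List.mem_cons_of_mem _ hek
          · exact ht₂.1 e he
        · intro a' ha'
          rw [Walk.support_cons, List.mem_cons] at ha'
          rcases ha' with rfl | ha'
          · exact hu
          · exact ht₂.2 a' ha'
        · rw [wlen_cons, wlen_cons]; linarith
      · -- the edge lies on the dropped arc
        have hu_wd : u ∈ wd.support := wd.fst_mem_support_of_mem_edges hed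
        have hu'_wd : u' ∈ wd.support := wd.snd_mem_support_of_mem_edges hed
        by_cases hu : u ∈ (Walk.cons hab.symm wk).support
        · have huab := memC'_wd u hu hu_wd
          refine ⟨fun _ => ?_, fun hnu => absurd hu hnu⟩
          by_cases hu' : u' ∈ (Walk.cons hab.symm wk).support
          · exfalso
            have hu'ab := memC'_wd u' hu' hu'_wd
            have hss : s(u, u') = s(a, b) := by
              rcases huab with rfl | rfl <;> rcases hu'ab with rfl | rfl
              · exact absurd rfl h'.ne
              · rfl
              · exact Sym2.eq_swap
              · exact absurd rfl h'.ne
            exact Hsab (hss ▸ he_c)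
          · obtain ⟨b', hb', wa, w₂, hwac, hw₂, hsum⟩ := ih'.2 hu'
            have hwa0 : 0 ≤ wlen ℓ wa := wlen_nonneg hpos wa
            by_cases hub : u = b'
            · subst hub
              refine ⟨w₂, hw₂, ?_⟩
              rw [wlen_cons]; linarith
            · have hkey : G.Adj u b' ∧ s(u, b') = s(a, b) := by
                rcases huab with rfl | rfl <;> rcases hb' with rfl | rfl
                · exact absurd rfl hub
                · exact ⟨hab, rfl⟩
                · exact ⟨hab.symm, Sym2.eq_swap⟩
                · exact absurd rfl hub
              have hcwalk : WalkIn c (Walk.cons h' wa) := by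
                refine ⟨?_, ?_⟩
                · intro e he
                  rw [Walk.edges_cons, List.mem_cons] at he
                  rcases he with rfl | he
                  · exact he_c
                  · exact hwac.1 e he
                · intro a' ha'
                  rw [Walk.support_cons, List.mem_cons] at ha'
                  rcases ha' with rfl | ha'
                  · exact hw.2 a' (Walk.start_mem_support _)
                  · exact hwac.2 a' ha'
              have hcd : cdist ℓ c u b' ≤ wlen ℓ (Walk.cons h' wa) := cdist_le hpos hcwalk
              have hlow : ℓ s(a, b) < cdist ℓ c u b' := by
                rcases huab with rfl | rfl <;> rcases hb' with rfl | rfl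
                · exact absurd rfl hub
                · exact Hlt
                · exact Hlt'
                · exact absurd rfl hub
              refine ⟨Walk.cons hkey.1 w₂, ⟨?_, ?_⟩, ?_⟩
              · intro e he
                rw [Walk.edges_cons, List.mem_cons] at he
                rcases he with rfl | he
                · rw [Walk.edges_cons]
                  have : s(u, b') = s(b, a) := hkey.2.trans Sym2.eq_swap
                  rw [this]
                  exact List.mem_cons_self
                · exact hw₂.1 e he
              · intro a' ha'
                rw [Walk.support_cons, List.mem_cons] at ha'
                rcases ha' with rfl | ha'
                · exact hu
                · exact hw₂.2 a' ha'
              · have hll : ℓ s(u, b') = ℓ s(a, b) := by rw [hkey.2]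
                rw [wlen_cons] at hcd
                rw [wlen_cons, wlen_cons]
                linarith
        · refine ⟨fun hyes => absurd hyes hu, fun _ => ?_⟩
          by_cases hu' : u' ∈ (Walk.cons hab.symm wk).support
          · have hu'ab := memC'_wd u' hu' hu'_wd
            obtain ⟨t₂, ht₂, hlen₂⟩ := ih'.1 hu'
            refine ⟨u', hu'ab, Walk.cons h' Walk.nil, t₂, ⟨?_, ?_⟩, ht₂, ?_⟩
            · intro e he
              simp only [Walk.edges_cons, Walk.edges_nil, List.mem_singleton] at he
              exact he ▸ he_c
            · intro a' ha'
              simp only [Walk.support_cons, Walk.support_nil, List.mem_cons,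
                List.not_mem_nil, or_false] at ha'
              rcases ha' with rfl | rfl
              · exact hw.2 a' (Walk.start_mem_support _)
              · exact hw.2 a' (by rw [Walk.support_cons]; exact List.mem_cons_of_mem _ t.start_mem_support)
            · rw [wlen_cons, wlen_nil', wlen_cons]; linarith
          · obtain ⟨b', hb', wa, w₂, hwac, hw₂, hsum⟩ := ih'.2 hu'
            refine ⟨b', hb', Walk.cons h' wa, w₂, ⟨?_, ?_⟩, hw₂, ?_⟩
            · intro e he
              rw [Walk.edges_cons, List.mem_cons] at he
              rcases he with rfl | he
              · exact he_c
              · exact hwac.1 e he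
            · intro a' ha'
              rw [Walk.support_cons, List.mem_cons] at ha'
              rcases ha' with rfl | ha'
              · exact hw.2 a' (Walk.start_mem_support _)
              · exact hwac.2 a' ha'
            · rw [wlen_cons, wlen_cons]; linarith

lemma lift {ℓ : Sym2 V → ℝ} {k : ℝ} (hpos : ∀ e ∈ G.edgeSet, 0 < ℓ e)
    {z a b x : V} {c : G.Walk z z} (hab : G.Adj a b) (wk : G.Walk a b)
    (Hke : ∀ e ∈ wk.edges, e ∈ c.edges) (Hks : ∀ v₀ ∈ wk.support, v₀ ∈ c.support)
    {u : V} (w : G.Walk u x) :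
    x ∈ c.support →
    (∀ u', u' = a ∨ u' = b → ∀ w₂ : G.Walk u' x, WalkIn c w₂ → k / 2 ≤ wlen ℓ w₂) →
    WalkIn (Walk.cons hab.symm wk) w → wlen ℓ w < k / 2 →
    ∃ w₂ : G.Walk u x, WalkIn c w₂ ∧ wlen ℓ w₂ ≤ wlen ℓ w := by
  induction w with
  | nil =>
      intro Hx _ _ _
      refine ⟨Walk.nil, ⟨by simp, ?_⟩, le_rfl⟩
      intro a' ha'
      simp only [Walk.support_nil, List.mem_singleton] at ha'
      exact ha' ▸ Hx
  | @cons u u' x h' t ih =>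
      intro Hx Hfar hw hlt
      have hwt : WalkIn (Walk.cons hab.symm wk) t :=
        ⟨fun e he => hw.1 e (by simp [he]), fun a' ha' => hw.2 a' (by simp [ha'])⟩
      have he : s(u, u') ∈ (Walk.cons hab.symm wk).edges := hw.1 _ (by simp)
      have hposE : 0 < ℓ s(u, u') :=
        hpos _ ((Walk.cons hab.symm wk).edges_subset_edgeSet he)
      have hlt' : wlen ℓ t < k / 2 := by rw [wlen_cons] at hlt; linarith
      rw [Walk.edges_cons, List.mem_cons] at he
      rcases he with hsp | hek
      · exfalso
        have hu' : u' = a ∨ u' = b := by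
          rcases Sym2.eq_iff.mp hsp with ⟨rfl, rfl⟩ | ⟨rfl, rfl⟩
          · exact Or.inl rfl
          · exact Or.inr rfl
        obtain ⟨t₂, ht₂, hlen₂⟩ := ih Hx Hfar hwt hlt'
        have := Hfar u' hu' t₂ ht₂
        linarith
      · obtain ⟨t₂, ht₂, hlen₂⟩ := ih Hx Hfar hwt hlt'
        refine ⟨Walk.cons h' t₂, ⟨?_, ?_⟩, ?_⟩
        · intro e hee
          rw [Walk.edges_cons, List.mem_cons] at hee
          rcases hee with rfl | hee
          · exact Hke _ hek
          · exact ht₂.1 e hee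
        · intro a' ha'
          rw [Walk.support_cons, List.mem_cons] at ha'
          rcases ha' with rfl | ha'
          · exact Hks a' (wk.fst_mem_support_of_mem_edges hek)
          · exact ht₂.2 a' ha'
        · rw [wlen_cons, wlen_cons]; linarith

lemma branch {ℓ : Sym2 V → ℝ} {k m : ℝ} (hpos : ∀ e ∈ G.edgeSet, 0 < ℓ e)
    {z a b x : V} {c : G.Walk z z} (hc0 : c.length ≠ 0) (hab : G.Adj a b)
    (wk : G.Walk a b) (wd : G.Walk b a)
    (Hsab : s(a, b) ∉ c.edges)
    (Hclass : ∀ e ∈ c.edges, e ∈ wk.edges ∨ e ∈ wd.edges)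
    (Hke : ∀ e ∈ wk.edges, e ∈ c.edges) (Hks : ∀ v₀ ∈ wk.support, v₀ ∈ c.support)
    (Hinter : ∀ v₀ ∈ wk.support, v₀ ∈ wd.support → v₀ = a ∨ v₀ = b)
    (HkPath : wk.IsPath)
    (Hlt : ℓ s(a, b) < cdist ℓ c a b)
    (Hfa : k / 2 ≤ cdist ℓ c a x) (Hfb : k / 2 ≤ cdist ℓ c b x)
    (hxk : x ∈ wk.support)
    {n : ℕ} (hn : wk.length + 1 ≤ n)
    (IH : ∀ (z₀ : V) (c₀ : G.Walk z₀ z₀), c₀.length ≤ n → c₀.IsCycle → k ≤ wlen ℓ c₀ →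
      ∀ x₀ ∈ c₀.support, ∃ (p q : V) (h : G.Adj p q),
        IsShortcut ℓ c₀ (Walk.cons h Walk.nil) ∧ ℓ s(p, q) ≤ m ∧
        (cdist ℓ c₀ p x₀ < k / 2 ∨ cdist ℓ c₀ q x₀ < k / 2)) :
    ∃ (p q : V) (h : G.Adj p q),
      IsShortcut ℓ c (Walk.cons h Walk.nil) ∧ ℓ s(p, q) ≤ m ∧
      (cdist ℓ c p x < k / 2 ∨ cdist ℓ c q x < k / 2) := by
  classical
  have Hlt' : ℓ s(a, b) < cdist ℓ c b a := by rw [cdist_symm ℓ c b a]; exact Hlt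
  have hC'cyc : (Walk.cons hab.symm wk).IsCycle := by
    rw [Walk.cons_isCycle_iff]
    refine ⟨HkPath, fun hmem => Hsab (Hke _ ?_)⟩
    rwa [Sym2.eq_swap]
  have hxc : x ∈ c.support := Hks x hxk
  have hac : a ∈ c.support := Hks a wk.start_mem_support
  have hbc : b ∈ c.support := Hks b wk.end_mem_support
  have hsplit := congrArg (wlen ℓ) (wk.take_spec hxk)
  rw [wlen_append] at hsplit
  have h1 : k / 2 ≤ wlen ℓ (wk.takeUntil x hxk) := by
    refine le_trans Hfa (cdist_le hpos ⟨?_, ?_⟩)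
    · intro e he; exact Hke e (Walk.edges_takeUntil_subset _ hxk he)
    · intro a' ha'; exact Hks a' (Walk.support_takeUntil_subset _ hxk ha')
  have h2 : k / 2 ≤ wlen ℓ (wk.dropUntil x hxk) := by
    have hcd : cdist ℓ c x b ≤ wlen ℓ (wk.dropUntil x hxk) :=
      cdist_le hpos ⟨fun e he => Hke e (Walk.edges_dropUntil_subset _ hxk he),
        fun a' ha' => Hks a' (Walk.support_dropUntil_subset _ hxk ha')⟩
    calc k / 2 ≤ cdist ℓ c b x := Hfb
      _ = cdist ℓ c x b := cdist_symm ℓ c b x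
      _ ≤ _ := hcd
  have hC'len : k ≤ wlen ℓ (Walk.cons hab.symm wk) := by
    rw [wlen_cons]
    have hba : 0 < ℓ s(b, a) := hpos _ (G.mem_edgeSet.2 hab.symm)
    linarith
  have hxC' : x ∈ (Walk.cons hab.symm wk).support := by
    rw [Walk.support_cons]; exact List.mem_cons_of_mem _ hxk
  obtain ⟨p, q, hpq, hsc, hm2, hball⟩ :=
    IH b (Walk.cons hab.symm wk) (by simpa [Walk.length_cons] using hn) hC'cyc hC'len x hxC'
  have hCs : ∀ v₀ ∈ (Walk.cons hab.symm wk).support, v₀ ∈ c.support := by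
    intro v₀ hv₀
    rw [Walk.support_cons, List.mem_cons] at hv₀
    rcases hv₀ with rfl | hv₀
    · exact hbc
    · exact Hks _ hv₀
  obtain ⟨hσpath, hpC', hqC', hslt⟩ := hsc
  have hslt' : ℓ s(p, q) < cdist ℓ (Walk.cons hab.symm wk) p q := by
    rw [wlen_cons, wlen_nil'] at hslt; linarith
  have hC'0 : (Walk.cons hab.symm wk).length ≠ 0 := by simp [Walk.length_cons]
  have hcc : cdist ℓ (Walk.cons hab.symm wk) p q ≤ cdist ℓ c p q := by
    obtain ⟨w0, hw0⟩ := exists_walkIn c hc0 (hCs p hpC') (hCs q hqC')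
    refine le_csInf ⟨wlen ℓ w0, w0, hw0, rfl⟩ ?_
    rintro r ⟨w, hw, rfl⟩
    obtain ⟨w₂, hw₂, hle⟩ :=
      (project hpos hab wk wd Hsab Hclass Hinter Hlt Hlt' w hw hqC').1 hpC'
    exact le_trans (cdist_le hpos hw₂) hle
  have hfinal_sc : IsShortcut ℓ c (Walk.cons hpq Walk.nil) := by
    refine ⟨?_, hCs p hpC', hCs q hqC', ?_⟩
    · simp [Walk.isPath_def, hpq.ne]
    · rw [wlen_cons, wlen_nil']; linarith
  have Hfar : ∀ u', u' = a ∨ u' = b → ∀ w₂ : G.Walk u' x, WalkIn c w₂ →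
      k / 2 ≤ wlen ℓ w₂ := by
    rintro u' (rfl | rfl) w₂ hw₂
    · exact le_trans Hfa (cdist_le hpos hw₂)
    · exact le_trans Hfb (cdist_le hpos hw₂)
  have transfer : ∀ v₀, v₀ ∈ (Walk.cons hab.symm wk).support →
      cdist ℓ (Walk.cons hab.symm wk) v₀ x < k / 2 → cdist ℓ c v₀ x < k / 2 := by
    intro v₀ hv₀ hvx
    obtain ⟨w0, hw0⟩ := exists_walkIn (Walk.cons hab.symm wk) hC'0 hv₀ hxC'
    have hvx' : sInf {r : ℝ | ∃ w : G.Walk v₀ x, WalkIn (Walk.cons hab.symm wk) w ∧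
        wlen ℓ w = r} < k / 2 := hvx
    have hne : Set.Nonempty {r : ℝ | ∃ w : G.Walk v₀ x,
        WalkIn (Walk.cons hab.symm wk) w ∧ wlen ℓ w = r} := ⟨wlen ℓ w0, w0, hw0, rfl⟩
    obtain ⟨r, ⟨w', hw', rfl⟩, hr⟩ := exists_lt_of_csInf_lt hne hvx'
    obtain ⟨w₂, hw₂, hle⟩ := lift hpos hab wk Hke Hks w' hxc Hfar hw' hr
    exact lt_of_le_of_lt (le_trans (cdist_le hpos hw₂) hle) hr
  refine ⟨p, q, hpq, hfinal_sc, hm2, ?_⟩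
  rcases hball with h | h
  · exact Or.inl (transfer p hpC' h)
  · exact Or.inr (transfer q hqC' h)

lemma key {ℓ : Sym2 V → ℝ} {k m : ℝ} (hpos : ∀ e ∈ G.edgeSet, 0 < ℓ e)
    (hEC : EdgeChordal G ℓ k m) :
    ∀ (n : ℕ) (z : V) (c : G.Walk z z), c.length ≤ n → c.IsCycle → k ≤ wlen ℓ c →
      ∀ x ∈ c.support, ∃ (p q : V) (h : G.Adj p q),
        IsShortcut ℓ c (Walk.cons h Walk.nil) ∧ ℓ s(p, q) ≤ m ∧
        (cdist ℓ c p x < k / 2 ∨ cdist ℓ c q x < k / 2) := by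
  classical
  intro n
  induction n with
  | zero =>
      intro z c hlen hcyc _ _ _
      exact absurd hcyc.three_le_length (by omega)
  | succ n IHn =>
      intro z c hlen hcyc hk x hx
      obtain ⟨p0, q0, hpq, hsc, hm0⟩ := hEC z c hcyc hk
      by_cases hnear : cdist ℓ c p0 x < k / 2 ∨ cdist ℓ c q0 x < k / 2
      · exact ⟨p0, q0, hpq, hsc, hm0, hnear⟩
      push_neg at hnear
      obtain ⟨hfarp, hfarq⟩ := hnear
      obtain ⟨hσp, hp0, hq0, hlt0⟩ := hsc
      have hlt : ℓ s(p0, q0) < cdist ℓ c p0 q0 := by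
        rw [wlen_cons, wlen_nil'] at hlt0; linarith
      have hc0 : c.length ≠ 0 := by have := hcyc.three_le_length; omega
      have Hsab : s(p0, q0) ∉ c.edges := by
        intro hmem
        have hwin : WalkIn c (Walk.cons hpq Walk.nil) := by
          refine ⟨?_, ?_⟩
          · intro e he
            simp only [Walk.edges_cons, Walk.edges_nil, List.mem_singleton] at he
            exact he ▸ hmem
          · intro a' ha'
            simp only [Walk.support_cons, Walk.support_nil, List.mem_cons,
              List.not_mem_nil, or_false] at ha'
            rcases ha' with rfl | rfl
            · exact hp0
            · exact hq0
        have hle := cdist_le hpos hwin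
        rw [wlen_cons, wlen_nil'] at hle
        linarith
      have hq0r : q0 ∈ (c.rotate p0 hp0).support := (mem_support_rotate c hp0 hc0).2 hq0
      set w1 := (c.rotate p0 hp0).takeUntil q0 hq0r with hw1def
      set w2 := (c.rotate p0 hp0).dropUntil q0 hq0r with hw2def
      have hspec : w1.append w2 = c.rotate p0 hp0 := (c.rotate p0 hp0).take_spec hq0r
      have hrotcyc : (c.rotate p0 hp0).IsCycle := hcyc.rotate hp0
      have hrlen : (c.rotate p0 hp0).length = c.length := length_rotate c hp0
      have hmem_e : ∀ e, e ∈ c.edges ↔ e ∈ (c.rotate p0 hp0).edges :=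
        fun e => (mem_edges_rotate c hp0).symm
      have hmem_s : ∀ v', v' ∈ c.support ↔ v' ∈ (c.rotate p0 hp0).support :=
        fun v' => (mem_support_rotate c hp0 hc0).symm
      have Hclass : ∀ e ∈ c.edges, e ∈ w1.edges ∨ e ∈ w2.edges := by
        intro e he
        have h' : e ∈ (w1.append w2).edges := by rw [hspec]; exact (hmem_e e).1 he
        rw [Walk.edges_append, List.mem_append] at h'
        exact h'
      have H1e : ∀ e ∈ w1.edges, e ∈ c.edges := fun e he =>
        (hmem_e e).2 (Walk.edges_takeUntil_subset _ hq0r he)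
      have H2e : ∀ e ∈ w2.edges, e ∈ c.edges := fun e he =>
        (hmem_e e).2 (Walk.edges_dropUntil_subset _ hq0r he)
      have H1s : ∀ v' ∈ w1.support, v' ∈ c.support := fun v' hv' =>
        (hmem_s v').2 (Walk.support_takeUntil_subset _ hq0r hv')
      have H2s : ∀ v' ∈ w2.support, v' ∈ c.support := fun v' hv' =>
        (hmem_s v').2 (Walk.support_dropUntil_subset _ hq0r hv')
      have hndr : (c.rotate p0 hp0).support.tail.Nodup := hrotcyc.support_nodup
      have htail : (c.rotate p0 hp0).support.tail = w1.support.tail ++ w2.support.tail := by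
        rw [← hspec, Walk.tail_support_append]
      have hne0 : p0 ≠ q0 := hpq.ne
      have hp0tail : p0 ∈ w2.support.tail := Walk.end_mem_tail_support_of_ne (Ne.symm hne0) w2
      have hq0tail : q0 ∈ w1.support.tail := Walk.end_mem_tail_support_of_ne hne0 w1
      have hnodups := List.nodup_append.mp (htail ▸ hndr)
      have hw1path : w1.IsPath := by
        rw [Walk.isPath_def, Walk.support_eq_cons]
        exact List.nodup_cons.mpr ⟨fun hmem => hnodups.2.2 _ hmem _ hp0tail rfl, hnodups.1⟩
      have hw2path : w2.IsPath := by
        rw [Walk.isPath_def, Walk.support_eq_cons]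
        exact List.nodup_cons.mpr ⟨fun hmem => hnodups.2.2 _ hq0tail _ hmem rfl, hnodups.2.1⟩
      have Hinter12 : ∀ v' ∈ w1.support, v' ∈ w2.support → v' = p0 ∨ v' = q0 := by
        intro v' h1 h2
        rw [Walk.support_eq_cons, List.mem_cons] at h1 h2
        rcases h1 with rfl | h1
        · exact Or.inl rfl
        rcases h2 with rfl | h2
        · exact Or.inr rfl
        exact (hnodups.2.2 _ h1 _ h2 rfl).elim
      have hlensum : w1.length + w2.length = c.length := by
        have hl := congrArg Walk.length hspec
        rw [Walk.length_append, hrlen] at hl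
        exact hl
      have hxsplit : x ∈ w1.support ∨ x ∈ w2.support := by
        have hxr : x ∈ (c.rotate p0 hp0).support := (hmem_s x).1 hx
        rw [← hspec, Walk.mem_support_append_iff] at hxr
        exact hxr
      rcases hxsplit with hx1 | hx2
      · have hlen2 : 2 ≤ w2.length := by
          refine two_le_length_of_ne w2 (Ne.symm hne0) (fun hh => Hsab ?_)
          rw [Sym2.eq_swap]
          exact H2e _ hh
        exact branch hpos hc0 hpq w1 w2 Hsab Hclass H1e H1s Hinter12 hw1path hlt
          hfarp hfarq hx1 (by omega) IHn
      · have hlen1 : 2 ≤ w1.length :=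
          two_le_length_of_ne w1 hne0 (fun hh => Hsab (H1e _ hh))
        have Hsab' : s(q0, p0) ∉ c.edges := by rw [Sym2.eq_swap]; exact Hsab
        have Hclass' : ∀ e ∈ c.edges, e ∈ w2.edges ∨ e ∈ w1.edges :=
          fun e he => (Hclass e he).symm
        have Hinter21 : ∀ v' ∈ w2.support, v' ∈ w1.support → v' = q0 ∨ v' = p0 :=
          fun v' h2 h1 => (Hinter12 v' h1 h2).symm
        have hlt2 : ℓ s(q0, p0) < cdist ℓ c q0 p0 := by
          rw [Sym2.eq_swap, cdist_symm ℓ c q0 p0]; exact hlt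
        exact branch hpos hc0 hpq.symm w2 w1 Hsab' Hclass' H2e H2s Hinter21 hw2path hlt2
          hfarq hfarp hx2 (by omega) IHn

end Aux

/-- If a metric graph `G` is `(k,m)`-edge-chordal, then it is
`ε`-densely `(k,m)`-path-chordal with `ε = k/2`: for every cycle `C` with `L(C) ≥ k`
and every `x ∈ C`, there is an edge-shortcut of `C` of length at most `m` having an
endpoint in the ball `B_C(x, k/2)` for the length metric `d_C`. -/
theorem edgeChordal_implies_denselyPathChordal
    {V : Type*} (G : SimpleGraph V) (ℓ : Sym2 V → ℝ) (hMG : IsMetricGraph G ℓ)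
    (k m : ℝ) (hk : 0 ≤ k) (hm : 0 ≤ m) (hEC : EdgeChordal G ℓ k m) :
    DenselyPathChordal G ℓ (k / 2) k m ∧
    ∀ (z : V) (c : G.Walk z z), c.IsCycle → k ≤ wlen ℓ c →
      ∀ x ∈ c.support, ∃ (p q : V) (h : G.Adj p q),
        IsShortcut ℓ c (SimpleGraph.Walk.cons h SimpleGraph.Walk.nil) ∧ ℓ s(p, q) ≤ m ∧
        (cdist ℓ c p x < k / 2 ∨ cdist ℓ c q x < k / 2) := by
  obtain ⟨hconn, hpos, hfin⟩ := hMG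
  have part2 : ∀ (z : V) (c : G.Walk z z), c.IsCycle → k ≤ wlen ℓ c →
      ∀ x ∈ c.support, ∃ (p q : V) (h : G.Adj p q),
        IsShortcut ℓ c (SimpleGraph.Walk.cons h SimpleGraph.Walk.nil) ∧ ℓ s(p, q) ≤ m ∧
        (cdist ℓ c p x < k / 2 ∨ cdist ℓ c q x < k / 2) := by
    intro z c hcyc hk x hx
    exact key hpos hEC c.length z c le_rfl hcyc hk x hx
  refine ⟨?_, part2⟩
  intro z c hcyc hk x hx
  obtain ⟨p, q, h, hsc, hm2, hball⟩ := part2 z c hcyc hk x hx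
  have hstrict : IsStrictShortcut ℓ c (Walk.cons h Walk.nil) := by
    refine ⟨hsc, ?_⟩
    intro a' ha' _
    simpa [Walk.support_cons, Walk.support_nil] using ha'
  have hwl : wlen ℓ (Walk.cons h Walk.nil) ≤ m := by
    rw [wlen_cons, wlen_nil']; linarith
  rcases hball with hb | hb
  · exact ⟨p, ⟨p, q, Walk.cons h Walk.nil, hstrict, hwl, Or.inl rfl⟩, hb⟩
  · exact ⟨q, ⟨p, q, Walk.cons h Walk.nil, hstrict, hwl, Or.inr rfl⟩, hb⟩

end Chordality
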